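/- arXiv:0902.3989 — 2 statements merged into one kernel-verified Lean document; each statement's English description precedes it below -/
import Mathlib

section
/- For a bounded operator A on a complex Hilbert space H, the following are equivalent: (1) for all vectors ξ₀, ξ₁ ∈ H, ∑_{i,j=0}^{1} ⟨A^i ξ_j, A^j ξ_i⟩ ≥ 0; (2) A*A ≥ AA* (A is hyponormal). -/
open scoped ComplexOrder

/-- For a bounded operator `A` on a complex Hilbert space, the `n = 1` Halmos–Bram
inequalities are equivalent to hyponormality `A*A ≥ AA*`. -/
theorem halmosBram_one_iff_hyponormal {H : Type*} [NormedAddCommGroup H]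
    [InnerProductSpace ℂ H] [CompleteSpace H] (A : H →L[ℂ] H) :
    (∀ ξ : Fin 2 → H,
        0 ≤ ∑ i : Fin 2, ∑ j : Fin 2,
          (inner ℂ ((A ^ (i : ℕ)) (ξ j)) ((A ^ (j : ℕ)) (ξ i)) : ℂ)) ↔
      (ContinuousLinearMap.adjoint A ∘L A - A ∘L ContinuousLinearMap.adjoint A).IsPositive := by
  set B := ContinuousLinearMap.adjoint A with hB
  have e3 : ∀ x : H, (inner ℂ ((B ∘L A - A ∘L B) x) x : ℂ)
      = inner ℂ (A x) (A x) - inner ℂ (B x) (B x) := by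
    intro x
    simp only [ContinuousLinearMap.sub_apply, ContinuousLinearMap.comp_apply, inner_sub_left]
    rw [hB, ContinuousLinearMap.adjoint_inner_left, ContinuousLinearMap.adjoint_inner_right]
  constructor
  · intro h
    rw [ContinuousLinearMap.isPositive_iff_complex]
    intro x
    have key : (0 : ℂ) ≤ inner ℂ ((B ∘L A - A ∘L B) x) x := by
      have := h ![-(B x), x]
      simp only [Fin.sum_univ_two, Fin.isValue, Fin.val_zero, Fin.val_one, pow_zero, pow_one,
        Matrix.cons_val_zero, Matrix.cons_val_one, Matrix.head_cons,
        ContinuousLinearMap.one_apply, map_neg, inner_neg_neg, inner_neg_left,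
        inner_neg_right] at this
      have e1 : (inner ℂ x (A (B x)) : ℂ) = inner ℂ (B x) (B x) := by
        rw [hB, ← ContinuousLinearMap.adjoint_inner_left]
      have e2 : (inner ℂ (A (B x)) x : ℂ) = inner ℂ (B x) (B x) := by
        rw [hB, ← ContinuousLinearMap.adjoint_inner_right]
      rw [e3 x]
      rw [e1, e2] at this
      linear_combination this
    have him := (Complex.le_def.mp key).2
    have hre := (Complex.le_def.mp key).1
    simp only [Complex.zero_im, Complex.zero_re] at him hre
    refine ⟨?_, hre⟩
    apply Complex.ext <;> simp [him, inner_sub_left]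
  · intro h ξ
    rw [ContinuousLinearMap.isPositive_iff_complex] at h
    obtain ⟨him, hre⟩ := h (ξ 1)
    rw [e3 (ξ 1)] at hre
    simp only [Fin.sum_univ_two, Fin.isValue, Fin.val_zero, Fin.val_one, pow_zero, pow_one,
      ContinuousLinearMap.one_apply]
    set w : ℂ := inner ℂ (A (ξ 0)) (ξ 1) with hw
    have hconj : (inner ℂ (ξ 1) (A (ξ 0)) : ℂ) = starRingEnd ℂ w := by
      rw [hw, inner_conj_symm]
    have hwre : |w.re| ≤ ‖ξ 0‖ * ‖B (ξ 1)‖ := by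
      have hwe : w = inner ℂ (ξ 0) (B (ξ 1)) := by
        rw [hw, hB, ContinuousLinearMap.adjoint_inner_right]
      calc |w.re| ≤ ‖w‖ := Complex.abs_re_le_norm w
        _ ≤ ‖ξ 0‖ * ‖B (ξ 1)‖ := by
            rw [hwe]; exact norm_inner_le_norm (𝕜 := ℂ) _ _
    have n0 : (inner ℂ (ξ 0) (ξ 0) : ℂ) = ((‖ξ 0‖^2 : ℝ) : ℂ) := by
      rw [inner_self_eq_norm_sq_to_K]; norm_cast
    have n1 : (inner ℂ (A (ξ 1)) (A (ξ 1)) : ℂ) = ((‖A (ξ 1)‖^2 : ℝ) : ℂ) := by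
      rw [inner_self_eq_norm_sq_to_K]; norm_cast
    rw [hconj, n0, n1, Complex.le_def]
    have hre' : (0:ℝ) ≤ ‖A (ξ 1)‖^2 - ‖B (ξ 1)‖^2 := by
      have n1 : (inner ℂ (A (ξ 1)) (A (ξ 1)) : ℂ) = ((‖A (ξ 1)‖^2 : ℝ) : ℂ) := by
        rw [inner_self_eq_norm_sq_to_K]; norm_cast
      have n2 : (inner ℂ (B (ξ 1)) (B (ξ 1)) : ℂ) = ((‖B (ξ 1)‖^2 : ℝ) : ℂ) := by
        rw [inner_self_eq_norm_sq_to_K]; norm_cast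
      rw [n1, n2] at hre
      simp only [map_sub, RCLike.re_to_complex, Complex.ofReal_re] at hre
      linarith
    constructor
    · simp only [Complex.add_re, Complex.conj_re, Complex.zero_re, Complex.ofReal_re]
      have habs := abs_le.mp hwre
      have hnn : (0:ℝ) ≤ ‖ξ 0‖ := norm_nonneg _
      have hnn2 : (0:ℝ) ≤ ‖B (ξ 1)‖ := norm_nonneg _
      nlinarith [sq_nonneg (‖ξ 0‖ - ‖B (ξ 1)‖)]
    · simp only [Complex.add_im, Complex.conj_im, Complex.zero_im, Complex.ofReal_im]
      ring
end

section
/- Let A ∈ B(H) with ‖A‖ ≤ 1 and set A(n) = Aⁿ for n ≥ 0, A(n) = (A*)^{|n|} for n < 0. Then for every ξ ∈ H the sequence a_n = ⟨A(n)ξ, ξ⟩, n ∈ ℤ, is of positive type: for every finitely supported sequence (λ_n) of complex numbers, ∑_{m,n ∈ ℤ} a_{n−m} λ_n conj(λ_m) ≥ 0. -/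
open scoped ComplexOrder

namespace ContractionMomentAux

open ContinuousLinearMap Finset

variable {H : Type*} [NormedAddCommGroup H] [InnerProductSpace ℂ H] [CompleteSpace H]

/-- The Toeplitz kernel entry for natural indices. -/
noncomputable def K (A : H →L[ℂ] H) (m n : ℕ) : H →L[ℂ] H :=
  if n ≤ m then A ^ (m - n) else (ContinuousLinearMap.adjoint A) ^ (n - m)

/-- `η_N = ∑_{j<N} A^{N-1-j} g j`. -/
noncomputable def eta (A : H →L[ℂ] H) (g : ℕ → H) (N : ℕ) : H :=
  ∑ j ∈ Finset.range N, (A ^ (N - 1 - j)) (g j)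

/-- The quadratic form. -/
noncomputable def Q (A : H →L[ℂ] H) (g : ℕ → H) (N : ℕ) : ℂ :=
  ∑ m ∈ Finset.range N, ∑ n ∈ Finset.range N, (inner ℂ (g m) ((K A m n) (g n)) : ℂ)

lemma sum_pow_eq (A : H →L[ℂ] H) (g : ℕ → H) (N : ℕ) :
    ∑ j ∈ Finset.range N, (A ^ (N - j)) (g j) = A (eta A g N) := by
  unfold eta
  rw [map_sum]
  apply Finset.sum_congr rfl
  intro j hj
  have hj' : j < N := Finset.mem_range.mp hj
  have h : N - j = (N - 1 - j) + 1 := by omega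
  rw [h, pow_succ', ContinuousLinearMap.mul_apply]

lemma eta_succ (A : H →L[ℂ] H) (g : ℕ → H) (N : ℕ) :
    eta A g (N + 1) = g N + A (eta A g N) := by
  have h1 : eta A g (N + 1) = ∑ j ∈ Finset.range N, (A ^ (N - j)) (g j) + g N := by
    unfold eta
    rw [Finset.sum_range_succ]
    simp only [Nat.add_sub_cancel, Nat.sub_self, pow_zero, ContinuousLinearMap.one_apply]
  rw [h1, sum_pow_eq, add_comm]

lemma Q_succ (A : H →L[ℂ] H) (g : ℕ → H) (N : ℕ) :
    Q A g (N + 1) = Q A g N + inner ℂ (g N) (g N)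
      + inner ℂ (g N) (A (eta A g N)) + inner ℂ (A (eta A g N)) (g N) := by
  unfold Q
  rw [Finset.sum_range_succ]
  have hsplit : ∀ m : ℕ, ∑ n ∈ Finset.range (N + 1), (inner ℂ (g m) ((K A m n) (g n)) : ℂ)
      = ∑ n ∈ Finset.range N, (inner ℂ (g m) ((K A m n) (g n)) : ℂ)
        + inner ℂ (g m) ((K A m N) (g N)) := fun m => Finset.sum_range_succ _ _
  rw [Finset.sum_congr rfl (fun m _ => hsplit m), Finset.sum_add_distrib, hsplit N]
  have hNN : (inner ℂ (g N) ((K A N N) (g N)) : ℂ) = inner ℂ (g N) (g N) := by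
    simp [K]
  have hrow : ∑ n ∈ Finset.range N, (inner ℂ (g N) ((K A N n) (g n)) : ℂ)
      = inner ℂ (g N) (A (eta A g N)) := by
    rw [← inner_sum, ← sum_pow_eq A g N]
    congr 1
    apply Finset.sum_congr rfl
    intro n hn
    have hn' : n < N := Finset.mem_range.mp hn
    rw [K, if_pos hn'.le]
  have hcol : ∑ m ∈ Finset.range N, (inner ℂ (g m) ((K A m N) (g N)) : ℂ)
      = inner ℂ (A (eta A g N)) (g N) := by
    have hterm : ∀ m ∈ Finset.range N, (inner ℂ (g m) ((K A m N) (g N)) : ℂ)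
        = inner ℂ ((A ^ (N - m)) (g m)) (g N) := by
      intro m hm
      have hm' : m < N := Finset.mem_range.mp hm
      rw [K, if_neg (by omega)]
      rw [← ContinuousLinearMap.star_eq_adjoint, ← star_pow,
        ContinuousLinearMap.star_eq_adjoint, ContinuousLinearMap.adjoint_inner_right]
    rw [Finset.sum_congr rfl hterm, ← sum_inner, sum_pow_eq A g N]
  rw [hNN, hrow, hcol]
  ring

lemma inner_eta_le_Q (A : H →L[ℂ] H) (hA : ‖A‖ ≤ 1) (g : ℕ → H) :
    ∀ N : ℕ, (inner ℂ (eta A g N) (eta A g N) : ℂ) ≤ Q A g N := by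
  intro N
  induction N with
  | zero => simp [Q, eta]
  | succ N ih =>
    rw [Q_succ, eta_succ, inner_add_add_self]
    have hnorm : ‖A (eta A g N)‖ ≤ ‖eta A g N‖ := by
      calc ‖A (eta A g N)‖ ≤ ‖A‖ * ‖eta A g N‖ := A.le_opNorm _
        _ ≤ 1 * ‖eta A g N‖ := mul_le_mul_of_nonneg_right hA (norm_nonneg _)
        _ = ‖eta A g N‖ := one_mul _
    have h1 : (inner ℂ (A (eta A g N)) (A (eta A g N)) : ℂ)
        ≤ inner ℂ (eta A g N) (eta A g N) := by
      rw [inner_self_eq_norm_sq_to_K, inner_self_eq_norm_sq_to_K]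
      have : ‖A (eta A g N)‖ ^ 2 ≤ ‖eta A g N‖ ^ 2 :=
        pow_le_pow_left₀ (norm_nonneg _) hnorm 2
      calc ((‖A (eta A g N)‖ : ℂ)) ^ 2 = ((‖A (eta A g N)‖ ^ 2 : ℝ) : ℂ) := by push_cast; ring
        _ ≤ ((‖eta A g N‖ ^ 2 : ℝ) : ℂ) := Complex.real_le_real.mpr this
        _ = ((‖eta A g N‖ : ℂ)) ^ 2 := by push_cast; ring
    have h2 : (inner ℂ (A (eta A g N)) (A (eta A g N)) : ℂ) ≤ Q A g N := h1.trans ih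
    calc (inner ℂ (g N) (g N) : ℂ) + inner ℂ (g N) (A (eta A g N))
          + inner ℂ (A (eta A g N)) (g N) + inner ℂ (A (eta A g N)) (A (eta A g N))
        = inner ℂ (A (eta A g N)) (A (eta A g N)) + ((inner ℂ (g N) (g N) : ℂ)
          + inner ℂ (g N) (A (eta A g N)) + inner ℂ (A (eta A g N)) (g N)) := by ring
      _ ≤ Q A g N + ((inner ℂ (g N) (g N) : ℂ)
          + inner ℂ (g N) (A (eta A g N)) + inner ℂ (A (eta A g N)) (g N)) :=
          add_le_add_left h2 _
      _ = Q A g N + inner ℂ (g N) (g N) + inner ℂ (g N) (A (eta A g N))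
          + inner ℂ (A (eta A g N)) (g N) := by ring

lemma Q_nonneg (A : H →L[ℂ] H) (hA : ‖A‖ ≤ 1) (g : ℕ → H) (N : ℕ) :
    0 ≤ Q A g N := by
  refine le_trans ?_ (inner_eta_le_Q A hA g N)
  rw [inner_self_eq_norm_sq_to_K]
  calc (0 : ℂ) = ((0 : ℝ) : ℂ) := by norm_num
    _ ≤ ((‖eta A g N‖ ^ 2 : ℝ) : ℂ) := Complex.real_le_real.mpr (sq_nonneg _)
    _ = ((‖eta A g N‖ : ℂ)) ^ 2 := by push_cast; ring

end ContractionMomentAux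

open ContinuousLinearMap Finset ContractionMomentAux in
/-- For a contraction `A`, with `A(n) = Aⁿ` for `n ≥ 0` and `A(n) = (A*)^{|n|}` for
`n < 0`, the sequence `a_n = ⟨A(n)ξ, ξ⟩` is of positive type on `ℤ`. -/
theorem contraction_moment_sequence_positive_type {H : Type*}
    [NormedAddCommGroup H] [InnerProductSpace ℂ H] [CompleteSpace H]
    (A : H →L[ℂ] H) (hA : ‖A‖ ≤ 1)
    (Az : ℤ → H →L[ℂ] H)
    (hpos : ∀ n : ℕ, Az (n : ℤ) = A ^ n)
    (hneg : ∀ n : ℕ, Az (-(n : ℤ)) = (ContinuousLinearMap.adjoint A) ^ n)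
    (ξ : H) (lam : ℤ →₀ ℂ) :
    0 ≤ ∑ n ∈ lam.support, ∑ m ∈ lam.support,
      (inner ℂ (Az (n - m) ξ) ξ : ℂ) * lam n * (starRingEnd ℂ) (lam m) := by
  classical
  set F : ℤ → ℤ → ℂ :=
    fun n m => (inner ℂ (Az (n - m) ξ) ξ : ℂ) * lam n * (starRingEnd ℂ) (lam m) with hF
  show 0 ≤ ∑ n ∈ lam.support, ∑ m ∈ lam.support, F n m
  rcases lam.support.eq_empty_or_nonempty with hs | hs
  · rw [hs]; simp
  -- adjoint relation
  have hadj : ∀ k : ℤ, ContinuousLinearMap.adjoint (Az k) = Az (-k) := by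
    intro k
    obtain ⟨n, rfl | rfl⟩ := Int.eq_nat_or_neg k
    · rw [hpos, ← ContinuousLinearMap.star_eq_adjoint, star_pow,
        ContinuousLinearMap.star_eq_adjoint, ← hneg]
    · rw [hneg, ← ContinuousLinearMap.star_eq_adjoint, star_pow,
        ContinuousLinearMap.star_eq_adjoint, ContinuousLinearMap.adjoint_adjoint,
        neg_neg, hpos]
  have hK : ∀ m n : ℕ, K A m n = Az ((m : ℤ) - (n : ℤ)) := by
    intro m n
    unfold K
    split_ifs with h
    · rw [← hpos (m - n)]
      congr 1
      omega
    · rw [← hneg (n - m)]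
      congr 1
      omega
  set a : ℤ := lam.support.min' hs with ha
  set b : ℤ := lam.support.max' hs with hb
  set N : ℕ := (b - a).toNat + 1 with hN
  have hmem : ∀ n ∈ lam.support, a ≤ n ∧ n < a + N := by
    intro n hn
    have h1 := lam.support.min'_le n hn
    have h2 := lam.support.le_max' n hn
    constructor
    · exact h1
    · omega
  set e : ℕ ↪ ℤ := ⟨fun j => a + (j : ℤ), by
    intro x y hxy
    simpa using hxy⟩ with he
  set t : Finset ℤ := (Finset.range N).map e with ht
  have hst : lam.support ⊆ t := by
    intro n hn
    obtain ⟨h1, h2⟩ := hmem n hn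
    rw [ht, Finset.mem_map]
    refine ⟨(n - a).toNat, Finset.mem_range.mpr (by omega), ?_⟩
    show a + ((n - a).toNat : ℤ) = n
    omega
  set g : ℕ → H := fun j => lam (a + (j : ℤ)) • ξ with hg
  -- each Q-term equals an F-term
  have hterm : ∀ m n : ℕ,
      (inner ℂ (g m) ((K A m n) (g n)) : ℂ) = F (a + (n : ℤ)) (a + (m : ℤ)) := by
    intro m n
    have h1 : (a + (n : ℤ)) - (a + (m : ℤ)) = (n : ℤ) - (m : ℤ) := by ring
    have h2 : (inner ℂ (Az ((n : ℤ) - (m : ℤ)) ξ) ξ : ℂ)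
        = inner ℂ ξ (Az ((m : ℤ) - (n : ℤ)) ξ) := by
      have h3 : Az ((n : ℤ) - (m : ℤ))
          = ContinuousLinearMap.adjoint (Az ((m : ℤ) - (n : ℤ))) := by
        rw [hadj]
        congr 1
        ring
      rw [h3, ContinuousLinearMap.adjoint_inner_left]
    rw [hF]
    simp only [hg, hK, inner_smul_left, inner_smul_right, map_smul, h1, h2]
    ring
  have hQ : Q A g N = ∑ n ∈ t, ∑ m ∈ t, F n m := by
    rw [ht, Finset.sum_map]
    unfold Q
    rw [Finset.sum_comm]
    apply Finset.sum_congr rfl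
    intro n _
    rw [Finset.sum_map]
    apply Finset.sum_congr rfl
    intro m _
    exact hterm m n
  have hF0 : ∀ n : ℤ, ∀ m ∉ lam.support, F n m = 0 := by
    intro n m hm
    rw [hF]
    simp [Finsupp.notMem_support_iff.mp hm]
  have hF0' : ∀ n ∉ lam.support, ∀ m : ℤ, F n m = 0 := by
    intro n hn m
    rw [hF]
    simp [Finsupp.notMem_support_iff.mp hn]
  have hS : ∑ n ∈ lam.support, ∑ m ∈ lam.support, F n m = ∑ n ∈ t, ∑ m ∈ t, F n m := by
    calc ∑ n ∈ lam.support, ∑ m ∈ lam.support, F n m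
        = ∑ n ∈ lam.support, ∑ m ∈ t, F n m :=
          Finset.sum_congr rfl fun n _ =>
            Finset.sum_subset hst (fun m _ hm => hF0 n m hm)
      _ = ∑ n ∈ t, ∑ m ∈ t, F n m :=
          Finset.sum_subset hst (fun n _ hn => Finset.sum_eq_zero fun m _ => hF0' n hn m)
  rw [hS, ← hQ]
  exact Q_nonneg A hA g N
end
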